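/- Let f be nondecreasing and satisfy (H1), (H2) and (H3). There exist C > 0 and ε₀ > 0, independent of ρ, such that for every ρ > 1, every ε ∈ (0, ε₀), and every truncated maximizer ζ^{ε,ρ} as in the context: Gζ^{ε,ρ}(x) ≤ (κ/(2π))·log(1/ε) + (κ/(4π))·log f(ρ) + C for every x ∈ Π. -/

import Mathlib

open MeasureTheory Real Filter
open scoped ENNReal Topology

noncomputable section

abbrev Pt : Type := EuclideanSpace ℝ (Fin 2)

/-- The point (a, b) in the plane. -/
def pt (a b : ℝ) : Pt := WithLp.toLp 2 ![a, b]

/-- The open right half plane Π. -/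
def halfPlane : Set Pt := {x | 0 < x 0}

/-- Reflection across the x₂-axis: x ↦ x̄. -/
def reflect (x : Pt) : Pt := pt (-(x 0)) (x 1)

/-- Reflection across the x₁-axis. -/
def flip2 (x : Pt) : Pt := pt (x 0) (-(x 1))

/-- Green's function of -Δ in the half plane with zero Dirichlet data. -/
def G (x y : Pt) : ℝ := (1 / (2 * π)) * Real.log (dist (reflect x) y / dist x y)

/-- Green's operator. -/
def Gop (ζ : Pt → ℝ) (x : Pt) : ℝ := ∫ y in halfPlane, G x y * ζ y

/-- The rectangle D. -/
def Dset (r : ℝ) : Set Pt := {x | r/2 < x 0 ∧ x 0 < 2*r ∧ -1 < x 1 ∧ x 1 < 1}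

/-- The admissible class A. -/
structure InA (r κ : ℝ) (ζ : Pt → ℝ) : Prop where
  measurable : Measurable ζ
  essBdd : ∃ M : ℝ, ∀ᵐ x ∂(volume : Measure Pt), |ζ x| ≤ M
  nonneg : ∀ᵐ x ∂(volume : Measure Pt), 0 ≤ ζ x
  mass_le : (∫ x in halfPlane, ζ x) ≤ κ
  support_ae : ∀ᵐ x ∂(volume : Measure Pt), x ∉ Dset r → ζ x = 0

/-- F(s) = ∫₀ˢ f(t) dt. -/
def Fint (f : ℝ → ℝ) (s : ℝ) : ℝ := ∫ t in (0:ℝ)..s, f t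

/-- The convex conjugate J of F, with values in [0, +∞] (note J ≥ 0 since F(0) = 0). -/
def Jconj (f : ℝ → ℝ) (s : ℝ) : ℝ≥0∞ := ⨆ t : ℝ, ENNReal.ofReal (s * t - Fint f t)

/-- The energy functional E_ε, with values in [-∞, +∞). -/
def energy (f : ℝ → ℝ) (r W ε : ℝ) (ζ : Pt → ℝ) : EReal :=
  (((1/2) * (∫ x in Dset r, ζ x * Gop ζ x) - W * ∫ x in Dset r, (x 0) * ζ x : ℝ) : EReal)
  - ((ENNReal.ofReal (ε⁻¹ ^ 2) * ∫⁻ x in Dset r, Jconj f (ε^2 * ζ x) : ℝ≥0∞) : EReal)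

/-- Steiner symmetry with respect to the line x₂ = 0. -/
def SteinerSym (ζ : Pt → ℝ) : Prop :=
  (∀ᵐ x ∂(volume : Measure Pt), ζ (flip2 x) = ζ x) ∧
  (∀ᵐ x₁ ∂(volume : Measure ℝ), ∃ g : ℝ → ℝ,
      (∀ᵐ x₂ ∂(volume : Measure ℝ), ζ (pt x₁ x₂) = g x₂) ∧
      ∀ s t : ℝ, |s| ≤ |t| → g t ≤ g s)

/-- Hypothesis (H1). -/
def H1 (f : ℝ → ℝ) : Prop := (∀ s ≤ 0, f s = 0) ∧ ∀ s, 0 < s → 0 < f s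

/-- ζ is a maximizer of E_ε over A. -/
def IsMaximizer (f : ℝ → ℝ) (r W κ ε : ℝ) (ζ : Pt → ℝ) : Prop :=
  InA r κ ζ ∧ ∀ ζ', InA r κ ζ' → energy f r W ε ζ' ≤ energy f r W ε ζ

/-- μ is a Lagrange multiplier for ζ. -/
def IsLM (f : ℝ → ℝ) (r W ε : ℝ) (ζ : Pt → ℝ) (μ : ℝ) : Prop :=
  0 ≤ μ ∧ ∀ᵐ x ∂(volume : Measure Pt), x ∈ Dset r →
    ζ x = ε⁻¹^2 * f (Gop ζ x - W * x 0 - μ)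

/-- The essential support of ζ. -/
def essSupport (ζ : Pt → ℝ) : Set Pt :=
  {x | ∀ U ∈ nhds x, volume {y ∈ U | ζ y ≠ 0} ≠ 0}

/-- The odd extension of ζ across the x₂-axis. -/
def oddExt (ζ : Pt → ℝ) (x : Pt) : ℝ :=
  if 0 < x 0 then ζ x else if x 0 < 0 then -(ζ (reflect x)) else 0

/-- The truncated nonlinearity f_ρ. -/
def ftr (f : ℝ → ℝ) (ρ : ℝ) (s : ℝ) : ℝ := min (f s) (f ρ)

/-- A (Steiner-symmetric) maximizer of the truncated energy E_{ε,ρ} over A, together with a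
Lagrange multiplier μ, solving the truncated equation on the half plane with total mass κ. -/
def IsTruncMax (f : ℝ → ℝ) (r W κ ε ρ : ℝ) (ζ : Pt → ℝ) (μ : ℝ) : Prop :=
  InA r κ ζ ∧ SteinerSym ζ ∧
  (∀ ζ', InA r κ ζ' → energy (ftr f ρ) r W ε ζ' ≤ energy (ftr f ρ) r W ε ζ) ∧
  0 ≤ μ ∧
  (∀ᵐ x ∂(volume : Measure Pt), x ∈ halfPlane →
     ζ x = ε⁻¹^2 * ftr f ρ (Gop ζ x - W * x 0 - μ)) ∧
  (∫ x in halfPlane, ζ x) = κ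

noncomputable def phi (t s : ℝ) : ℝ := max 0 (Real.log (t / |s|))
noncomputable def psi (t s : ℝ) : ℝ := Set.indicator (Set.Icc (-t) t) (fun _ => (1:ℝ)) s

lemma phi_nonneg (t s : ℝ) : 0 ≤ phi t s := le_max_left _ _
lemma psi_nonneg (t s : ℝ) : 0 ≤ psi t s := by
  unfold psi; by_cases h : s ∈ Set.Icc (-t) t <;> simp [h]

lemma measurable_phi (t : ℝ) : Measurable (phi t) :=
  measurable_const.max (Real.measurable_log.comp (measurable_const.div measurable_abs))

lemma measurable_psi (t : ℝ) : Measurable (psi t) :=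
  (measurable_const.indicator measurableSet_Icc)

lemma lint_psi (t : ℝ) :
    ∫⁻ s : ℝ, ENNReal.ofReal (psi t s) ≤ ENNReal.ofReal (2 * t) := by
  calc ∫⁻ s : ℝ, ENNReal.ofReal (psi t s)
      = ∫⁻ s : ℝ, (Set.Icc (-t) t).indicator (fun _ => (1:ENNReal)) s :=
        lintegral_congr fun s => by
          unfold psi; by_cases h : s ∈ Set.Icc (-t) t <;> simp [h]
    _ = 1 * volume (Set.Icc (-t) t) := by
        rw [lintegral_indicator measurableSet_Icc, setLIntegral_const]
    _ ≤ ENNReal.ofReal (2 * t) := by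
        rw [Real.volume_Icc, one_mul]
        exact le_of_eq (congrArg _ (by ring))

lemma lint_phi {t : ℝ} (ht : 0 < t) :
    ∫⁻ s : ℝ, ENNReal.ofReal (phi t s) ≤ ENNReal.ofReal (8 * t) := by
  set g : ℝ → ℝ := Set.indicator (Set.Ioc 0 t) (fun s => 2 * Real.sqrt t * s ^ (-(2⁻¹) : ℝ)) with hg
  have hbound : ∀ s : ℝ, 0 ≤ s → phi t s ≤ g s := by
    intro s hs
    rcases eq_or_lt_of_le hs with h0 | h0
    · simp [phi, ← h0, hg, Real.log_zero]
    · rcases le_or_gt s t with hst | hst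
      · have hmem : s ∈ Set.Ioc 0 t := ⟨h0, hst⟩
        rw [hg, Set.indicator_of_mem hmem]
        have habs : |s| = s := abs_of_pos h0
        have hpos : 0 < t / s := div_pos ht h0
        have h1 : Real.log (t / s) = 2 * Real.log (Real.sqrt (t / s)) := by
          rw [Real.log_sqrt (le_of_lt hpos)]; ring
        have h2 : Real.log (Real.sqrt (t / s)) ≤ Real.sqrt (t / s) := by
          have := Real.log_le_sub_one_of_pos (Real.sqrt_pos.mpr hpos)
          linarith
        have h3 : Real.sqrt (t / s) = Real.sqrt t * s ^ (-(2⁻¹) : ℝ) := by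
          rw [Real.sqrt_div ht.le, Real.sqrt_eq_rpow s, div_eq_mul_inv, ← Real.rpow_neg h0.le]
          norm_num
        have h5 : 2 * Real.sqrt (t / s) = 2 * Real.sqrt t * s ^ (-(2⁻¹) : ℝ) := by
          rw [h3]; ring
        have hrhs : 0 ≤ 2 * Real.sqrt t * s ^ (-(2⁻¹) : ℝ) := by
          have := Real.rpow_nonneg h0.le (-(2⁻¹) : ℝ)
          positivity
        have hlog : Real.log (t / s) ≤ 2 * Real.sqrt t * s ^ (-(2⁻¹) : ℝ) := by
          rw [h1, ← h5]; linarith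
        simp only [phi, habs]
        exact max_le hrhs hlog
      · have hle : Real.log (t / |s|) ≤ 0 := by
          apply Real.log_nonpos
          · positivity
          · rw [abs_of_pos h0]
            exact (div_le_one h0).mpr hst.le
        have hphi : phi t s = 0 := by
          simp only [phi]; exact max_eq_left hle
        have hgz : g s = 0 := by
          rw [hg, Set.indicator_of_notMem]
          simp only [Set.mem_Ioc, not_and_or, not_lt, not_le]
          right; exact hst
        rw [hphi, hgz]
  have hgint : IntegrableOn (fun s : ℝ => 2 * Real.sqrt t * s ^ (-(2⁻¹) : ℝ)) (Set.Ioc 0 t) := by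
    have h1 : IntervalIntegrable (fun s : ℝ => s ^ (-(2⁻¹) : ℝ)) volume 0 t :=
      intervalIntegral.intervalIntegrable_rpow' (by norm_num)
    have h2 := (h1.const_mul (2 * Real.sqrt t))
    rw [intervalIntegrable_iff, Set.uIoc_of_le ht.le] at h2
    exact h2
  have hval : ∫ s in Set.Ioc 0 t, 2 * Real.sqrt t * s ^ (-(2⁻¹) : ℝ) ≤ 4 * t := by
    have h0 : ∫ s in Set.Ioc 0 t, 2 * Real.sqrt t * s ^ (-(2⁻¹) : ℝ)
        = ∫ s in (0:ℝ)..t, 2 * Real.sqrt t * s ^ (-(2⁻¹) : ℝ) := by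
      rw [intervalIntegral.integral_of_le ht.le]
    have h1 : ∫ s in (0:ℝ)..t, s ^ (-(2⁻¹) : ℝ) = 2 * Real.sqrt t := by
      rw [integral_rpow (Or.inl (by norm_num))]
      rw [Real.zero_rpow (by norm_num), Real.sqrt_eq_rpow]
      norm_num
      ring
    rw [h0, intervalIntegral.integral_const_mul, h1]
    have := Real.mul_self_sqrt ht.le
    nlinarith [Real.sqrt_nonneg t]
  have hgnn : 0 ≤ᵐ[volume.restrict (Set.Ioc 0 t)]
      (fun s : ℝ => 2 * Real.sqrt t * s ^ (-(2⁻¹) : ℝ)) := by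
    filter_upwards [ae_restrict_mem measurableSet_Ioc] with s hs
    have := Real.rpow_nonneg hs.1.le (-(2⁻¹) : ℝ)
    positivity
  have hlg : ∫⁻ s : ℝ, ENNReal.ofReal (g s) ≤ ENNReal.ofReal (4 * t) := by
    calc ∫⁻ s : ℝ, ENNReal.ofReal (g s)
        = ∫⁻ s : ℝ, (Set.Ioc 0 t).indicator
            (fun s => ENNReal.ofReal (2 * Real.sqrt t * s ^ (-(2⁻¹) : ℝ))) s :=
          lintegral_congr fun s => by
            rw [hg]; by_cases h : s ∈ Set.Ioc 0 t <;> simp [Set.indicator_of_mem,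
              Set.indicator_of_notMem, h]
      _ = ∫⁻ s in Set.Ioc 0 t, ENNReal.ofReal (2 * Real.sqrt t * s ^ (-(2⁻¹) : ℝ)) :=
          lintegral_indicator measurableSet_Ioc _
      _ = ENNReal.ofReal (∫ s in Set.Ioc 0 t, 2 * Real.sqrt t * s ^ (-(2⁻¹) : ℝ)) :=
          (ofReal_integral_eq_lintegral_ofReal hgint hgnn).symm
      _ ≤ ENNReal.ofReal (4 * t) := ENNReal.ofReal_le_ofReal hval
  have hmeas : Measurable (fun s : ℝ => ENNReal.ofReal (phi t s)) :=
    (measurable_phi t).ennreal_ofReal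
  have hgmeas : Measurable fun s : ℝ => ENNReal.ofReal (g s) := by
    apply Measurable.ennreal_ofReal
    rw [hg]
    exact Measurable.indicator (by fun_prop) measurableSet_Ioc
  have hsplit : ∫⁻ s : ℝ, ENNReal.ofReal (phi t s)
      = (∫⁻ s in Set.Ici (0:ℝ), ENNReal.ofReal (phi t s))
        + ∫⁻ s in Set.Iio (0:ℝ), ENNReal.ofReal (phi t s) := by
    rw [← Set.compl_Ici (a := (0:ℝ))]
    exact (lintegral_add_compl _ (measurableSet_Ici)).symm
  have hpos : ∀ S : Set ℝ, S ⊆ Set.Ici (0:ℝ) →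
      ∫⁻ s in S, ENNReal.ofReal (phi t s) ≤ ENNReal.ofReal (4 * t) := by
    intro S hS
    calc ∫⁻ s in S, ENNReal.ofReal (phi t s)
        ≤ ∫⁻ s in S, ENNReal.ofReal (g s) :=
          setLIntegral_mono hgmeas (fun s hs => ENNReal.ofReal_le_ofReal (hbound s (hS hs)))
      _ ≤ ∫⁻ s : ℝ, ENNReal.ofReal (g s) := setLIntegral_le_lintegral _ _
      _ ≤ ENNReal.ofReal (4 * t) := hlg
  have hneg : ∫⁻ s in Set.Iio (0:ℝ), ENNReal.ofReal (phi t s) ≤ ENNReal.ofReal (4 * t) := by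
    have hmp : MeasurePreserving (fun s : ℝ => -s) volume volume :=
      ⟨measurable_neg, Measure.map_neg_eq_self _⟩
    have hF : Measurable fun s : ℝ =>
        (Set.Iio (0:ℝ)).indicator (fun u => ENNReal.ofReal (phi t u)) s :=
      hmeas.indicator measurableSet_Iio
    have h1 : ∫⁻ s in Set.Iio (0:ℝ), ENNReal.ofReal (phi t s)
        = ∫⁻ s : ℝ, (Set.Iio (0:ℝ)).indicator (fun u => ENNReal.ofReal (phi t u)) s :=
      (lintegral_indicator measurableSet_Iio _).symm
    have h2 : ∫⁻ s : ℝ, (Set.Iio (0:ℝ)).indicator (fun u => ENNReal.ofReal (phi t u)) s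
        = ∫⁻ s : ℝ, (Set.Iio (0:ℝ)).indicator (fun u => ENNReal.ofReal (phi t u)) (-s) :=
      (hmp.lintegral_comp hF).symm
    have h3 : ∀ s : ℝ, (Set.Iio (0:ℝ)).indicator (fun u => ENNReal.ofReal (phi t u)) (-s)
        = (Set.Ioi (0:ℝ)).indicator (fun u => ENNReal.ofReal (phi t u)) s := by
      intro s
      by_cases h : s ∈ Set.Ioi (0:ℝ)
      · rw [Set.indicator_of_mem h,
          Set.indicator_of_mem (show -s ∈ Set.Iio (0:ℝ) by simp at h ⊢; linarith)]
        simp [phi, abs_neg]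
      · rw [Set.indicator_of_notMem h,
          Set.indicator_of_notMem (show -s ∉ Set.Iio (0:ℝ) by simp at h ⊢; linarith)]
    calc ∫⁻ s in Set.Iio (0:ℝ), ENNReal.ofReal (phi t s)
        = ∫⁻ s : ℝ, (Set.Iio (0:ℝ)).indicator (fun u => ENNReal.ofReal (phi t u)) (-s) := by
          rw [h1, h2]
      _ = ∫⁻ s : ℝ, (Set.Ioi (0:ℝ)).indicator (fun u => ENNReal.ofReal (phi t u)) s :=
          lintegral_congr h3
      _ = ∫⁻ s in Set.Ioi (0:ℝ), ENNReal.ofReal (phi t s) :=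
          lintegral_indicator measurableSet_Ioi _
      _ ≤ ENNReal.ofReal (4 * t) := hpos _ (Set.Ioi_subset_Ici le_rfl)
  calc ∫⁻ s : ℝ, ENNReal.ofReal (phi t s)
      = (∫⁻ s in Set.Ici (0:ℝ), ENNReal.ofReal (phi t s))
        + ∫⁻ s in Set.Iio (0:ℝ), ENNReal.ofReal (phi t s) := hsplit
    _ ≤ ENNReal.ofReal (4 * t) + ENNReal.ofReal (4 * t) :=
        add_le_add (hpos _ (le_refl _)) hneg
    _ = ENNReal.ofReal (8 * t) := by
        rw [← ENNReal.ofReal_add (by linarith) (by linarith)]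
        congr 1
        ring

lemma measurable_coord (i : Fin 2) : Measurable fun x : Pt => x i :=
  (measurable_pi_apply i).comp (WithLp.measurable_ofLp _ _)

lemma coord_le_norm (z : Pt) (i : Fin 2) : |z i| ≤ ‖z‖ := by
  rw [EuclideanSpace.norm_eq]
  have h1 : |z i| = Real.sqrt (‖z i‖^2) := by
    rw [Real.sqrt_sq_eq_abs, Real.norm_eq_abs, abs_abs]
  rw [h1]
  exact Real.sqrt_le_sqrt (Finset.single_le_sum (f := fun j => ‖z j‖^2)
    (fun j _ => sq_nonneg _) (Finset.mem_univ i))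

lemma prod_bound {t : ℝ} (ht : 0 < t) (z : Pt) :
    max 0 (Real.log (t / ‖z‖)) ≤ phi t (z 0) * psi t (z 1) + phi t (z 1) * psi t (z 0) := by
  have hrhs : 0 ≤ phi t (z 0) * psi t (z 1) + phi t (z 1) * psi t (z 0) := by
    have := phi_nonneg t (z 0); have := phi_nonneg t (z 1)
    have := psi_nonneg t (z 0); have := psi_nonneg t (z 1)
    positivity
  rcases eq_or_lt_of_le (norm_nonneg z) with h0 | h0
  · rw [← h0, div_zero, Real.log_zero, max_self]; exact hrhs
  rcases le_or_gt t ‖z‖ with hzt | hzt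
  · have : Real.log (t / ‖z‖) ≤ 0 :=
      Real.log_nonpos (by positivity) ((div_le_one h0).mpr hzt)
    rw [max_eq_left this]; exact hrhs
  · have hpsi0 : psi t (z 0) = 1 := by
      unfold psi
      rw [Set.indicator_of_mem]
      rw [Set.mem_Icc, ← abs_le]
      exact (coord_le_norm z 0).trans hzt.le
    have hpsi1 : psi t (z 1) = 1 := by
      unfold psi
      rw [Set.indicator_of_mem]
      rw [Set.mem_Icc, ← abs_le]
      exact (coord_le_norm z 1).trans hzt.le
    -- pick the coordinate with maximal absolute value
    rcases le_total (|z 0|) (|z 1|) with hc | hc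
    · have hz1 : 0 < |z 1| := by
        rcases lt_or_eq_of_le (abs_nonneg (z 1)) with h | h
        · exact h
        · exfalso
          have h1 : z 1 = 0 := by rwa [eq_comm, abs_eq_zero] at h
          have h2 : z 0 = 0 := by
            have := hc; rw [← h] at this
            exact abs_eq_zero.mp (le_antisymm (by simpa [h1] using this) (abs_nonneg _))
          have : ‖z‖ = 0 := by
            rw [EuclideanSpace.norm_eq, Fin.sum_univ_two]
            simp [h1, h2]
          linarith
      have hmono : Real.log (t / ‖z‖) ≤ Real.log (t / |z 1|) :=
        Real.log_le_log (by positivity) (by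
          apply div_le_div_of_nonneg_left ht.le hz1
          exact (coord_le_norm z 1))
      calc max 0 (Real.log (t / ‖z‖)) ≤ max 0 (Real.log (t / |z 1|)) :=
            max_le_max le_rfl hmono
        _ = phi t (z 1) * psi t (z 0) := by rw [hpsi0, mul_one]; rfl
        _ ≤ _ := le_add_of_nonneg_left (by
            have := phi_nonneg t (z 0); have := psi_nonneg t (z 1); positivity)
    · have hz0 : 0 < |z 0| := by
        rcases lt_or_eq_of_le (abs_nonneg (z 0)) with h | h
        · exact h
        · exfalso
          have h1 : z 0 = 0 := by rwa [eq_comm, abs_eq_zero] at h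
          have h2 : z 1 = 0 := by
            have := hc; rw [← h] at this
            exact abs_eq_zero.mp (le_antisymm (by simpa [h1] using this) (abs_nonneg _))
          have : ‖z‖ = 0 := by
            rw [EuclideanSpace.norm_eq, Fin.sum_univ_two]
            simp [h1, h2]
          linarith
      have hmono : Real.log (t / ‖z‖) ≤ Real.log (t / |z 0|) :=
        Real.log_le_log (by positivity) (by
          apply div_le_div_of_nonneg_left ht.le hz0
          exact (coord_le_norm z 0))
      calc max 0 (Real.log (t / ‖z‖)) ≤ max 0 (Real.log (t / |z 0|)) :=
            max_le_max le_rfl hmono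
        _ = phi t (z 0) * psi t (z 1) := by rw [hpsi1, mul_one]; rfl
        _ ≤ _ := le_add_of_nonneg_right (by
            have := phi_nonneg t (z 1); have := psi_nonneg t (z 0); positivity)

lemma dist_coords (x y : Pt) : dist x y = Real.sqrt ((x 0 - y 0)^2 + (x 1 - y 1)^2) := by
  rw [EuclideanSpace.dist_eq, Fin.sum_univ_two]
  simp [Real.dist_eq, sq_abs]

lemma reflect_zero (x : Pt) : reflect x 0 = -(x 0) := by simp [reflect, pt]
lemma reflect_one (x : Pt) : reflect x 1 = x 1 := by simp [reflect, pt]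

lemma dist_reflect_ge (x y : Pt) (hx : 0 < x 0) (hy : 0 < y 0) :
    dist x y ≤ dist (reflect x) y := by
  rw [dist_coords, dist_coords, reflect_zero, reflect_one]
  apply Real.sqrt_le_sqrt
  nlinarith [mul_pos hx hy]

lemma dist_reflect_le (x y : Pt) {r : ℝ} (hr : 0 < r) (hx : 0 < x 0)
    (hy : 0 < y 0) (hy2 : y 0 < 2*r) :
    dist (reflect x) y ≤ dist x y + 4*r := by
  rw [dist_coords, dist_coords, reflect_zero, reflect_one]
  set a := x 0; set b := y 0; set c := (x 1 - y 1)^2 with hcdef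
  have hc : 0 ≤ c := sq_nonneg _
  have hB : 0 ≤ (a - b)^2 + c := by positivity
  have hsb : a - b ≤ Real.sqrt ((a - b)^2 + c) := by
    calc a - b ≤ |a - b| := le_abs_self _
      _ = Real.sqrt ((a - b)^2) := (Real.sqrt_sq_eq_abs _).symm
      _ ≤ Real.sqrt ((a - b)^2 + c) := Real.sqrt_le_sqrt (by linarith)
  have hsq : Real.sqrt ((a-b)^2 + c) ^ 2 = (a-b)^2 + c := Real.sq_sqrt hB
  have hsn : 0 ≤ Real.sqrt ((a-b)^2 + c) := Real.sqrt_nonneg _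
  have key : (-a - b)^2 + c ≤ (Real.sqrt ((a - b)^2 + c) + 4*r)^2 := by
    nlinarith [hsb, hsq, hsn, mul_pos hx hy, sq_nonneg (a+b)]
  calc Real.sqrt ((-a - b)^2 + c) ≤ Real.sqrt ((Real.sqrt ((a - b)^2 + c) + 4*r)^2) :=
        Real.sqrt_le_sqrt key
    _ = Real.sqrt ((a - b)^2 + c) + 4*r := Real.sqrt_sq (by positivity)

lemma G_nonneg {x y : Pt} (hx : x ∈ halfPlane) (hy : y ∈ halfPlane) : 0 ≤ G x y := by
  rcases eq_or_lt_of_le (dist_nonneg (x := x) (y := y)) with hd | hd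
  · unfold G; rw [← hd, div_zero, Real.log_zero, mul_zero]
  · apply mul_nonneg (by positivity)
    apply Real.log_nonneg
    rw [le_div_iff₀ hd, one_mul]
    exact dist_reflect_ge x y hx hy

lemma measurableSet_halfPlane : MeasurableSet halfPlane :=
  measurableSet_lt measurable_const (measurable_coord 0)

lemma measurableSet_Dset (r : ℝ) : MeasurableSet (Dset r) := by
  exact MeasurableSet.inter (measurableSet_lt measurable_const (measurable_coord 0))
    ((measurableSet_lt (measurable_coord 0) measurable_const).inter
      ((measurableSet_lt measurable_const (measurable_coord 1)).inter
        (measurableSet_lt (measurable_coord 1) measurable_const)))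

lemma Dset_vol {r : ℝ} (hr : 0 < r) : volume (Dset r) < ⊤ := by
  have hsub : Dset r ⊆ Metric.closedBall (0:Pt) (2*r+1) := by
    intro z hz
    obtain ⟨h1, h2, h3, h4⟩ := hz
    rw [Metric.mem_closedBall, dist_zero_right]
    have h : ‖z‖ = Real.sqrt (|z 0|^2 + |z 1|^2) := by
      rw [EuclideanSpace.norm_eq, Fin.sum_univ_two]; norm_num
    rw [h]
    have ha : |z 0| ≤ 2*r := by rw [abs_le]; constructor <;> nlinarith
    have hb : |z 1| ≤ 1 := by rw [abs_le]; constructor <;> linarith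
    calc Real.sqrt (|z 0|^2 + |z 1|^2) ≤ Real.sqrt ((2*r+1)^2) := by
          apply Real.sqrt_le_sqrt
          nlinarith [abs_nonneg (z 0), abs_nonneg (z 1)]
      _ = 2*r+1 := Real.sqrt_sq (by linarith)
  exact lt_of_le_of_lt (measure_mono hsub) measure_closedBall_lt_top

set_option maxHeartbeats 2000000 in
theorem statement_16
    (r κ W : ℝ) (hr : 0 < r) (hκ : 0 < κ) (hW : W = κ / (4 * π * r))
    (f : ℝ → ℝ) (hf : Monotone f) (hf1 : H1 f)
    (ϑ₀ ϑ₁ : ℝ) (hϑ₀ : 0 < ϑ₀) (hϑ₀' : ϑ₀ < 1) (hϑ₁ : 0 < ϑ₁)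
    (hH2 : ∀ s, 0 ≤ s → Fint f s ≤ ϑ₀ * f s * s + ϑ₁ * f s)
    (hH3 : Filter.liminf
      (fun s => f s * Real.exp (-(4 * π * min (2 * ϑ₀) (2 - 2 * ϑ₀) / κ) * s)) Filter.atTop = 0) :
    ∃ C > (0:ℝ), ∃ ε₀ > (0:ℝ), ∀ ρ : ℝ, 1 < ρ → ∀ ε : ℝ, 0 < ε → ε < ε₀ →
      ∀ ζ μ, IsTruncMax f r W κ ε ρ ζ μ →
        ∀ x ∈ halfPlane,
          Gop ζ x ≤ κ / (2 * π) * Real.log (1 / ε) + κ / (4 * π) * Real.log (f ρ) + C := by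
  have hπ : 0 < π := Real.pi_pos
  have hf1pos : 0 < f 1 := hf1.2 1 one_pos
  have hsκ : 0 < Real.sqrt κ := Real.sqrt_pos.mpr hκ
  set c₂ : ℝ := Real.log (1 + 4*r / Real.sqrt κ) with hc₂
  have h4rκ : 0 ≤ 4*r/Real.sqrt κ := by positivity
  have hc₂nn : 0 ≤ c₂ := Real.log_nonneg (by linarith)
  refine ⟨κ/(2*π) * c₂ + 16*κ/π + 1, ?_, min 1 (Real.sqrt (f 1)), ?_, ?_⟩
  · have h1 : 0 ≤ κ/(2*π) * c₂ := mul_nonneg (by positivity) hc₂nn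
    have h2 : 0 < 16*κ/π := by positivity
    linarith
  · have := Real.sqrt_pos.mpr hf1pos
    positivity
  intro ρ hρ ε hε hεε₀ ζ μ hT x hx
  obtain ⟨hA, hsym, hmax, hμnn, hEL, hmass⟩ := hT
  have hfρ : 0 < f ρ := lt_of_lt_of_le hf1pos (hf hρ.le)
  set M : ℝ := ε⁻¹^2 * f ρ with hM
  have hMpos : 0 < M := by positivity
  have hε1 : ε < 1 := lt_of_lt_of_le hεε₀ (min_le_left _ _)
  have hεsq : ε^2 < f 1 := by
    have h := lt_of_lt_of_le hεε₀ (min_le_right _ _)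
    have hs := Real.sq_sqrt hf1pos.le
    nlinarith [Real.sqrt_nonneg (f 1)]
  have hM1 : 1 ≤ M := by
    have h1 : ε^2 ≤ f ρ := le_trans hεsq.le (hf hρ.le)
    have h2 : ε⁻¹^2 * ε^2 = 1 := by field_simp
    calc (1:ℝ) = ε⁻¹^2 * ε^2 := h2.symm
      _ ≤ ε⁻¹^2 * f ρ := mul_le_mul_of_nonneg_left h1 (by positivity)
  set t : ℝ := Real.sqrt (κ / M) with htdef
  have ht : 0 < t := Real.sqrt_pos.mpr (by positivity)
  have ht2 : t^2 = κ / M := Real.sq_sqrt (by positivity)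
  set L : ℝ := 1/(2*π) * Real.log (1 + 4*r/t) with hL
  have h4rt : 0 ≤ 4*r/t := by positivity
  have hLnn : 0 ≤ L := mul_nonneg (by positivity) (Real.log_nonneg (by linarith))
  set c : ℝ := M/(2*π) with hc
  have hcnn : 0 ≤ c := by positivity
  -- a.e. upper bound on ζ
  have hζM : ∀ᵐ y ∂(volume : Measure Pt), y ∈ halfPlane → ζ y ≤ M := by
    filter_upwards [hEL] with y hy hmem
    rw [hy hmem, hM]
    exact mul_le_mul_of_nonneg_left (min_le_right _ _) (by positivity)
  -- integrability of ζ on the half plane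
  obtain ⟨Mb, hMb⟩ := hA.essBdd
  have hDm := measurableSet_Dset r
  have hζint : IntegrableOn ζ halfPlane := by
    apply Integrable.mono' (g := Set.indicator (Dset r) (fun _ => max Mb 0))
    · exact ((integrableOn_const (Dset_vol hr).ne).integrable_indicator hDm).integrableOn
    · exact hA.measurable.aestronglyMeasurable.restrict
    · apply ae_restrict_of_ae
      filter_upwards [hMb, hA.support_ae] with y h1 h2
      by_cases hyD : y ∈ Dset r
      · rw [Set.indicator_of_mem hyD, Real.norm_eq_abs]
        exact le_trans h1 (le_max_left _ _)
      · rw [Set.indicator_of_notMem hyD, h2 hyD]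
        simp
  have hmassL : ∫⁻ y in halfPlane, ENNReal.ofReal (ζ y) = ENNReal.ofReal κ := by
    rw [← hmass]
    exact (ofReal_integral_eq_lintegral_ofReal hζint (ae_restrict_of_ae hA.nonneg)).symm
  -- measurability
  have hGmeas : Measurable (fun y => G x y * ζ y) := by
    apply Measurable.mul _ hA.measurable
    apply Measurable.const_mul
    apply Real.measurable_log.comp
    exact (Continuous.dist continuous_const continuous_id).measurable.div
      (Continuous.dist continuous_const continuous_id).measurable
  have hnn : 0 ≤ᵐ[volume.restrict halfPlane] fun y => G x y * ζ y := by
    filter_upwards [ae_restrict_mem measurableSet_halfPlane, ae_restrict_of_ae hA.nonneg]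
      with y h1 h2
    exact mul_nonneg (G_nonneg hx h1) h2
  have hrep : Gop ζ x = (∫⁻ y in halfPlane, ENNReal.ofReal (G x y * ζ y)).toReal := by
    unfold Gop
    rw [integral_eq_lintegral_of_nonneg_ae hnn hGmeas.aestronglyMeasurable.restrict]
  -- pointwise bound
  have hptR : ∀ᵐ y ∂(volume.restrict halfPlane),
      G x y * ζ y ≤ L * ζ y + (c * (phi t (y 0 - x 0) * psi t (y 1 - x 1))
        + c * (phi t (y 1 - x 1) * psi t (y 0 - x 0))) := by
    filter_upwards [ae_restrict_mem measurableSet_halfPlane, ae_restrict_of_ae hA.nonneg,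
      ae_restrict_of_ae hζM, ae_restrict_of_ae hA.support_ae] with y hyH hynn hyM hyD
    have hP1 : 0 ≤ phi t (y 0 - x 0) * psi t (y 1 - x 1) :=
      mul_nonneg (phi_nonneg _ _) (psi_nonneg _ _)
    have hP2 : 0 ≤ phi t (y 1 - x 1) * psi t (y 0 - x 0) :=
      mul_nonneg (phi_nonneg _ _) (psi_nonneg _ _)
    by_cases hyDm : y ∈ Dset r
    · obtain ⟨hD1, hD2, _, _⟩ := hyDm
      have hy0 : 0 < y 0 := by linarith
      have hT0 : 0 ≤ max 0 (Real.log (t / dist x y)) := le_max_left _ _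
      have hGb : G x y ≤ L + 1/(2*π) * max 0 (Real.log (t / dist x y)) := by
        rcases eq_or_lt_of_le (dist_nonneg (x := x) (y := y)) with hd | hd
        · have h' : 0 ≤ 1/(2*π) * max 0 (Real.log (t / dist x y)) :=
            mul_nonneg (by positivity) hT0
          unfold G
          rw [← hd, div_zero, Real.log_zero, mul_zero]
          have h'' : (0:ℝ) ≤ 1/(2*π) * max 0 (Real.log (t / 0)) :=
            mul_nonneg (by positivity) (le_max_left _ _)
          linarith
        · have hdr : dist (reflect x) y ≤ dist x y + 4*r := dist_reflect_le x y hr hx hy0 hD2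
          have hdrpos : 0 < dist (reflect x) y := lt_of_lt_of_le hd (dist_reflect_ge x y hx hy0)
          have hstep1 : Real.log (dist (reflect x) y / dist x y)
              ≤ Real.log ((dist x y + 4*r) / dist x y) :=
            Real.log_le_log (by positivity) ((div_le_div_iff_of_pos_right hd).mpr hdr)
          rcases le_or_gt t (dist x y) with hdt | hdt
          · have h2 : (dist x y + 4*r) / dist x y ≤ 1 + 4*r/t := by
              rw [add_div, div_self (ne_of_gt hd)]
              have := div_le_div_of_nonneg_left (show (0:ℝ) ≤ 4*r by linarith) ht hdt
              linarith
            have h3 : Real.log ((dist x y + 4*r) / dist x y) ≤ Real.log (1 + 4*r/t) :=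
              Real.log_le_log (by positivity) h2
            calc G x y = 1/(2*π) * Real.log (dist (reflect x) y / dist x y) := rfl
              _ ≤ 1/(2*π) * Real.log (1 + 4*r/t) :=
                  mul_le_mul_of_nonneg_left (le_trans hstep1 h3) (by positivity)
              _ = L := hL.symm
              _ ≤ L + 1/(2*π) * max 0 (Real.log (t / dist x y)) :=
                  le_add_of_nonneg_right (mul_nonneg (by positivity) hT0)
          · have h2 : (dist x y + 4*r) / dist x y ≤ (t + 4*r) / dist x y :=
              (div_le_div_iff_of_pos_right hd).mpr (by linarith)
            have h4 : (t + 4*r) / dist x y = (1 + 4*r/t) * (t / dist x y) := by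
              field_simp
            have h5 : Real.log ((t + 4*r) / dist x y)
                = Real.log (1 + 4*r/t) + Real.log (t / dist x y) := by
              rw [h4, Real.log_mul (by positivity) (by positivity)]
            calc G x y = 1/(2*π) * Real.log (dist (reflect x) y / dist x y) := rfl
              _ ≤ 1/(2*π) * (Real.log (1 + 4*r/t) + max 0 (Real.log (t / dist x y))) := by
                  apply mul_le_mul_of_nonneg_left _ (by positivity)
                  calc Real.log (dist (reflect x) y / dist x y)
                      ≤ Real.log ((dist x y + 4*r) / dist x y) := hstep1
                    _ ≤ Real.log ((t + 4*r) / dist x y) := Real.log_le_log (by positivity) h2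
                    _ = Real.log (1 + 4*r/t) + Real.log (t / dist x y) := h5
                    _ ≤ Real.log (1 + 4*r/t) + max 0 (Real.log (t / dist x y)) := by
                        have := le_max_right (0:ℝ) (Real.log (t / dist x y))
                        linarith
              _ = L + 1/(2*π) * max 0 (Real.log (t / dist x y)) := by rw [hL]; ring
      have hmax_le : max 0 (Real.log (t / dist x y))
          ≤ phi t (y 0 - x 0) * psi t (y 1 - x 1) + phi t (y 1 - x 1) * psi t (y 0 - x 0) := by
        have hdd : dist x y = ‖y - x‖ := by rw [dist_comm, dist_eq_norm]
        have hcoord0 : (y - x) 0 = y 0 - x 0 := by simp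
        have hcoord1 : (y - x) 1 = y 1 - x 1 := by simp
        rw [hdd, ← hcoord0, ← hcoord1]
        exact prod_bound ht (y - x)
      have hmul1 : G x y * ζ y ≤ (L + 1/(2*π) * max 0 (Real.log (t / dist x y))) * ζ y :=
        mul_le_mul_of_nonneg_right hGb hynn
      have hmul2 : (1/(2*π) * max 0 (Real.log (t / dist x y))) * ζ y
          ≤ (1/(2*π) * max 0 (Real.log (t / dist x y))) * M :=
        mul_le_mul_of_nonneg_left (hyM hyH) (mul_nonneg (by positivity) hT0)
      have hmul3 : (1/(2*π) * max 0 (Real.log (t / dist x y))) * M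
          = c * max 0 (Real.log (t / dist x y)) := by rw [hc]; ring
      have hmul4 : c * max 0 (Real.log (t / dist x y))
          ≤ c * (phi t (y 0 - x 0) * psi t (y 1 - x 1)
            + phi t (y 1 - x 1) * psi t (y 0 - x 0)) :=
        mul_le_mul_of_nonneg_left hmax_le hcnn
      have hexp : (L + 1/(2*π) * max 0 (Real.log (t / dist x y))) * ζ y
          = L * ζ y + (1/(2*π) * max 0 (Real.log (t / dist x y))) * ζ y := by ring
      have hexp2 : c * (phi t (y 0 - x 0) * psi t (y 1 - x 1)
            + phi t (y 1 - x 1) * psi t (y 0 - x 0))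
          = c * (phi t (y 0 - x 0) * psi t (y 1 - x 1))
            + c * (phi t (y 1 - x 1) * psi t (y 0 - x 0)) := by ring
      linarith
    · rw [hyD hyDm, mul_zero, mul_zero]
      have h1 := mul_nonneg hcnn hP1
      have h2 := mul_nonneg hcnn hP2
      linarith
  -- pass to lintegrals
  have hpt : ∀ᵐ y ∂(volume.restrict halfPlane),
      ENNReal.ofReal (G x y * ζ y) ≤ ENNReal.ofReal (L * ζ y)
        + (ENNReal.ofReal (c * (phi t (y 0 - x 0) * psi t (y 1 - x 1)))
          + ENNReal.ofReal (c * (phi t (y 1 - x 1) * psi t (y 0 - x 0)))) := by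
    filter_upwards [hptR] with y hy
    calc ENNReal.ofReal (G x y * ζ y)
        ≤ ENNReal.ofReal (L * ζ y + (c * (phi t (y 0 - x 0) * psi t (y 1 - x 1))
            + c * (phi t (y 1 - x 1) * psi t (y 0 - x 0)))) := ENNReal.ofReal_le_ofReal hy
      _ ≤ ENNReal.ofReal (L * ζ y)
            + ENNReal.ofReal (c * (phi t (y 0 - x 0) * psi t (y 1 - x 1))
              + c * (phi t (y 1 - x 1) * psi t (y 0 - x 0))) := ENNReal.ofReal_add_le
      _ ≤ _ := add_le_add le_rfl ENNReal.ofReal_add_le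
  have hlint1 : ∫⁻ y in halfPlane, ENNReal.ofReal (L * ζ y) ≤ ENNReal.ofReal (L * κ) := by
    apply le_of_eq
    calc ∫⁻ y in halfPlane, ENNReal.ofReal (L * ζ y)
        = ∫⁻ y in halfPlane, ENNReal.ofReal L * ENNReal.ofReal (ζ y) :=
          lintegral_congr fun y => ENNReal.ofReal_mul hLnn
      _ = ENNReal.ofReal L * ∫⁻ y in halfPlane, ENNReal.ofReal (ζ y) :=
          lintegral_const_mul _ hA.measurable.ennreal_ofReal
      _ = ENNReal.ofReal L * ENNReal.ofReal κ := by rw [hmassL]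
      _ = ENNReal.ofReal (L * κ) := (ENNReal.ofReal_mul hLnn).symm
  -- product transport
  have hmpe : MeasurePreserving (fun z : Pt => ((z 0, z 1) : ℝ × ℝ)) volume volume :=
    (volume_preserving_finTwoArrow ℝ).comp
      (EuclideanSpace.volume_preserving_symm_measurableEquiv_toLp (Fin 2))
  have hsh : ∀ (H : ℝ → ℝ), Measurable H → ∀ a : ℝ,
      ∫⁻ s : ℝ, ENNReal.ofReal (H (s - a)) = ∫⁻ s : ℝ, ENNReal.ofReal (H s) := by
    intro H hH a
    simpa [sub_eq_add_neg] using
      (measurePreserving_add_right volume (-a)).lintegral_comp hH.ennreal_ofReal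
  have hterm : ∀ (F K : ℝ → ℝ), Measurable F → Measurable K → (∀ s, 0 ≤ F s) →
      ∫⁻ y : Pt, ENNReal.ofReal (F (y 0 - x 0) * K (y 1 - x 1))
        = (∫⁻ s : ℝ, ENNReal.ofReal (F s)) * (∫⁻ s : ℝ, ENNReal.ofReal (K s)) := by
    intro F K hFm hKm hFnn
    set g : ℝ × ℝ → ℝ≥0∞ :=
      fun p => ENNReal.ofReal (F (p.1 - x 0)) * ENNReal.ofReal (K (p.2 - x 1)) with hgdef
    have hgmeas : Measurable g :=
      ((hFm.comp (measurable_fst.sub measurable_const)).ennreal_ofReal).mul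
        ((hKm.comp (measurable_snd.sub measurable_const)).ennreal_ofReal)
    calc ∫⁻ y : Pt, ENNReal.ofReal (F (y 0 - x 0) * K (y 1 - x 1))
        = ∫⁻ y : Pt, g ((fun z : Pt => ((z 0, z 1) : ℝ × ℝ)) y) :=
          lintegral_congr fun y => by
            rw [hgdef, ENNReal.ofReal_mul (hFnn _)]
      _ = ∫⁻ p : ℝ × ℝ, g p := hmpe.lintegral_comp hgmeas
      _ = (∫⁻ s : ℝ, ENNReal.ofReal (F (s - x 0))) * (∫⁻ s : ℝ, ENNReal.ofReal (K (s - x 1))) := by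
          rw [hgdef, show (volume : Measure (ℝ × ℝ)) = (volume : Measure ℝ).prod volume from rfl]
          exact lintegral_prod_mul
            ((hFm.comp (measurable_id.sub measurable_const)).ennreal_ofReal).aemeasurable
            ((hKm.comp (measurable_id.sub measurable_const)).ennreal_ofReal).aemeasurable
      _ = (∫⁻ s : ℝ, ENNReal.ofReal (F s)) * (∫⁻ s : ℝ, ENNReal.ofReal (K s)) := by
          rw [hsh F hFm (x 0), hsh K hKm (x 1)]
  have hmeasφ0 : Measurable fun y : Pt =>
      ENNReal.ofReal (phi t (y 0 - x 0) * psi t (y 1 - x 1)) :=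
    (((measurable_phi t).comp ((measurable_coord 0).sub measurable_const)).mul
      ((measurable_psi t).comp ((measurable_coord 1).sub measurable_const))).ennreal_ofReal
  have hmeasφ1 : Measurable fun y : Pt =>
      ENNReal.ofReal (phi t (y 1 - x 1) * psi t (y 0 - x 0)) :=
    (((measurable_phi t).comp ((measurable_coord 1).sub measurable_const)).mul
      ((measurable_psi t).comp ((measurable_coord 0).sub measurable_const))).ennreal_ofReal
  have hlint2 : ∫⁻ y in halfPlane,
      ENNReal.ofReal (c * (phi t (y 0 - x 0) * psi t (y 1 - x 1)))
        ≤ ENNReal.ofReal c * (ENNReal.ofReal (8*t) * ENNReal.ofReal (2*t)) := by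
    calc ∫⁻ y in halfPlane, ENNReal.ofReal (c * (phi t (y 0 - x 0) * psi t (y 1 - x 1)))
        ≤ ∫⁻ y : Pt, ENNReal.ofReal (c * (phi t (y 0 - x 0) * psi t (y 1 - x 1))) :=
          setLIntegral_le_lintegral _ _
      _ = ∫⁻ y : Pt, ENNReal.ofReal c
            * ENNReal.ofReal (phi t (y 0 - x 0) * psi t (y 1 - x 1)) :=
          lintegral_congr fun y => ENNReal.ofReal_mul hcnn
      _ = ENNReal.ofReal c * ∫⁻ y : Pt,
            ENNReal.ofReal (phi t (y 0 - x 0) * psi t (y 1 - x 1)) :=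
          lintegral_const_mul _ hmeasφ0
      _ = ENNReal.ofReal c * ((∫⁻ s : ℝ, ENNReal.ofReal (phi t s))
            * (∫⁻ s : ℝ, ENNReal.ofReal (psi t s))) := by
          rw [hterm (phi t) (psi t) (measurable_phi t) (measurable_psi t) (phi_nonneg t)]
      _ ≤ ENNReal.ofReal c * (ENNReal.ofReal (8*t) * ENNReal.ofReal (2*t)) := by
          exact mul_le_mul_right (mul_le_mul' (lint_phi ht) (lint_psi t)) _
  have hlint3 : ∫⁻ y in halfPlane,
      ENNReal.ofReal (c * (phi t (y 1 - x 1) * psi t (y 0 - x 0)))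
        ≤ ENNReal.ofReal c * (ENNReal.ofReal (2*t) * ENNReal.ofReal (8*t)) := by
    calc ∫⁻ y in halfPlane, ENNReal.ofReal (c * (phi t (y 1 - x 1) * psi t (y 0 - x 0)))
        ≤ ∫⁻ y : Pt, ENNReal.ofReal (c * (phi t (y 1 - x 1) * psi t (y 0 - x 0))) :=
          setLIntegral_le_lintegral _ _
      _ = ∫⁻ y : Pt, ENNReal.ofReal c
            * ENNReal.ofReal (psi t (y 0 - x 0) * phi t (y 1 - x 1)) :=
          lintegral_congr fun y => by
            rw [mul_comm (phi t (y 1 - x 1)), ENNReal.ofReal_mul hcnn]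
      _ = ENNReal.ofReal c * ∫⁻ y : Pt,
            ENNReal.ofReal (psi t (y 0 - x 0) * phi t (y 1 - x 1)) := by
          apply lintegral_const_mul
          exact (((measurable_psi t).comp ((measurable_coord 0).sub measurable_const)).mul
            ((measurable_phi t).comp ((measurable_coord 1).sub measurable_const))).ennreal_ofReal
      _ = ENNReal.ofReal c * ((∫⁻ s : ℝ, ENNReal.ofReal (psi t s))
            * (∫⁻ s : ℝ, ENNReal.ofReal (phi t s))) := by
          rw [hterm (psi t) (phi t) (measurable_psi t) (measurable_phi t) (psi_nonneg t)]
      _ ≤ ENNReal.ofReal c * (ENNReal.ofReal (2*t) * ENNReal.ofReal (8*t)) := by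
          exact mul_le_mul_right (mul_le_mul' (lint_psi t) (lint_phi ht)) _
  have hmeasLζ : Measurable fun y : Pt => ENNReal.ofReal (L * ζ y) :=
    (hA.measurable.const_mul L).ennreal_ofReal
  have hmeascφ0 : Measurable fun y : Pt =>
      ENNReal.ofReal (c * (phi t (y 0 - x 0) * psi t (y 1 - x 1))) :=
    ((((measurable_phi t).comp ((measurable_coord 0).sub measurable_const)).mul
      ((measurable_psi t).comp ((measurable_coord 1).sub measurable_const))).const_mul c).ennreal_ofReal
  have htot : ∫⁻ y in halfPlane, ENNReal.ofReal (G x y * ζ y)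
      ≤ ENNReal.ofReal (L * κ)
        + (ENNReal.ofReal c * (ENNReal.ofReal (8*t) * ENNReal.ofReal (2*t))
          + ENNReal.ofReal c * (ENNReal.ofReal (2*t) * ENNReal.ofReal (8*t))) := by
    calc ∫⁻ y in halfPlane, ENNReal.ofReal (G x y * ζ y)
        ≤ ∫⁻ y in halfPlane, (ENNReal.ofReal (L * ζ y)
            + (ENNReal.ofReal (c * (phi t (y 0 - x 0) * psi t (y 1 - x 1)))
              + ENNReal.ofReal (c * (phi t (y 1 - x 1) * psi t (y 0 - x 0))))) :=
          lintegral_mono_ae hpt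
      _ = (∫⁻ y in halfPlane, ENNReal.ofReal (L * ζ y))
            + ((∫⁻ y in halfPlane, ENNReal.ofReal (c * (phi t (y 0 - x 0) * psi t (y 1 - x 1))))
              + ∫⁻ y in halfPlane, ENNReal.ofReal (c * (phi t (y 1 - x 1) * psi t (y 0 - x 0)))) := by
          rw [lintegral_add_left hmeasLζ, lintegral_add_left hmeascφ0]
      _ ≤ _ := add_le_add hlint1 (add_le_add hlint2 hlint3)
  -- turn the bound into a real bound
  have hBnn : 0 ≤ L * κ + 32 * (c * t^2) := by
    have := mul_nonneg hLnn hκ.le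
    have h2 : 0 ≤ c * t^2 := mul_nonneg hcnn (sq_nonneg t)
    linarith
  have hcombine : ENNReal.ofReal (L * κ)
      + (ENNReal.ofReal c * (ENNReal.ofReal (8*t) * ENNReal.ofReal (2*t))
        + ENNReal.ofReal c * (ENNReal.ofReal (2*t) * ENNReal.ofReal (8*t)))
      = ENNReal.ofReal (L * κ + 32 * (c * t^2)) := by
    have e1 : ENNReal.ofReal (8*t) * ENNReal.ofReal (2*t) = ENNReal.ofReal (16 * t^2) := by
      rw [← ENNReal.ofReal_mul (by linarith)]
      congr 1; ring
    have e2 : ENNReal.ofReal (2*t) * ENNReal.ofReal (8*t) = ENNReal.ofReal (16 * t^2) := by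
      rw [← ENNReal.ofReal_mul (by linarith)]
      congr 1; ring
    have e3 : ENNReal.ofReal c * ENNReal.ofReal (16 * t^2) = ENNReal.ofReal (16 * (c * t^2)) := by
      rw [← ENNReal.ofReal_mul hcnn]
      congr 1; ring
    rw [e1, e2, e3]
    rw [← ENNReal.ofReal_add (by positivity) (by positivity)]
    rw [← ENNReal.ofReal_add (mul_nonneg hLnn hκ.le) (by positivity)]
    congr 1; ring
  have hGop : Gop ζ x ≤ L * κ + 32 * (c * t^2) := by
    rw [hrep]
    calc (∫⁻ y in halfPlane, ENNReal.ofReal (G x y * ζ y)).toReal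
        ≤ (ENNReal.ofReal (L * κ + 32 * (c * t^2))).toReal := by
          apply ENNReal.toReal_mono ENNReal.ofReal_ne_top
          rw [← hcombine]; exact htot
      _ = L * κ + 32 * (c * t^2) := ENNReal.toReal_ofReal hBnn
  -- arithmetic of the bound
  have hct : c * t^2 = κ/(2*π) := by
    rw [hc, ht2]
    field_simp [hMpos.ne', hπ.ne']
  have hsqrtM : 1 ≤ Real.sqrt M := by
    rw [show (1:ℝ) = Real.sqrt 1 from Real.sqrt_one.symm]
    exact Real.sqrt_le_sqrt hM1
  have hsM : 0 < Real.sqrt M := lt_of_lt_of_le one_pos hsqrtM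
  have htform : t = Real.sqrt κ / Real.sqrt M := by rw [htdef, Real.sqrt_div hκ.le]
  have harg : 1 + 4*r/t ≤ Real.sqrt M * (1 + 4*r/Real.sqrt κ) := by
    rw [htform]
    have e : 4*r/(Real.sqrt κ/Real.sqrt M) = Real.sqrt M * (4*r/Real.sqrt κ) := by
      field_simp
    rw [e]
    have e2 : Real.sqrt M * (1 + 4*r/Real.sqrt κ)
        = Real.sqrt M + Real.sqrt M * (4*r/Real.sqrt κ) := by ring
    rw [e2]
    linarith
  have hlog1 : Real.log (1 + 4*r/t) ≤ Real.log (Real.sqrt M) + c₂ := by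
    calc Real.log (1 + 4*r/t) ≤ Real.log (Real.sqrt M * (1 + 4*r/Real.sqrt κ)) :=
          Real.log_le_log (by positivity) harg
      _ = Real.log (Real.sqrt M) + Real.log (1 + 4*r/Real.sqrt κ) :=
          Real.log_mul (ne_of_gt hsM) (by positivity)
      _ = Real.log (Real.sqrt M) + c₂ := by rw [hc₂]
  have hlogsM : Real.log (Real.sqrt M) = Real.log M / 2 := Real.log_sqrt hMpos.le
  have hlogM : Real.log M = 2 * Real.log (1/ε) + Real.log (f ρ) := by
    rw [hM, Real.log_mul (by positivity) (ne_of_gt hfρ), Real.log_pow]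
    rw [Real.log_inv, Real.log_div one_ne_zero (ne_of_gt hε), Real.log_one]
    push_cast
    ring
  have hfrac : κ/(2*π) * (Real.log (f ρ)/2) = κ/(4*π) * Real.log (f ρ) := by ring
  have hLκ : L * κ = κ/(2*π) * Real.log (1 + 4*r/t) := by rw [hL]; ring
  have hmul := mul_le_mul_of_nonneg_left
    (le_trans hlog1 (le_of_eq (by rw [hlogsM, hlogM])))
    (show (0:ℝ) ≤ κ/(2*π) by positivity)
  -- hmul : κ/(2π) * log(1+4r/t) ≤ κ/(2π) * ((2 log(1/ε) + log f ρ)/2 + c₂)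
  have hexpand : κ/(2*π) * ((2 * Real.log (1/ε) + Real.log (f ρ))/2 + c₂)
      = κ/(2*π) * Real.log (1/ε) + κ/(4*π) * Real.log (f ρ) + κ/(2*π) * c₂ := by ring
  have h16 : 32 * (c * t^2) = 16*κ/π := by rw [hct]; ring
  calc Gop ζ x ≤ L * κ + 32 * (c * t^2) := hGop
    _ = κ/(2*π) * Real.log (1 + 4*r/t) + 16*κ/π := by rw [hLκ, h16]
    _ ≤ κ/(2*π) * Real.log (1/ε) + κ/(4*π) * Real.log (f ρ) + κ/(2*π) * c₂ + 16*κ/π := by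
        rw [hexpand] at hmul
        linarith
    _ ≤ κ/(2*π) * Real.log (1/ε) + κ/(4*π) * Real.log (f ρ)
        + (κ/(2*π) * c₂ + 16*κ/π + 1) := by linarith


end
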